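/- Let G = (V, ∼) be a connected finite VT⁺ graph with n = |V| vertices and graph distance dist, let B be a finite set, let ε > 0, and let M : V → B → ℝ be a channel matrix satisfying ε-differential privacy with respect to ∼. Then for every vertex i₀ ∈ V: ∑_{b ∈ B} max_{i ∈ V} M i b ≤ n / (∑_{j ∈ V} exp(−ε · dist(i₀, j))). Equivalently, under the uniform input distribution the a posteriori min-entropy satisfies H∞(V|B) ≥ −log₂(1 / ∑_{d=0}^{δ} n_d · exp(−ε d)), where n_d = |{j : dist(i₀, j) = d}| and δ is the diameter of G. -/

import Mathlib

/-- A finite graph `G` with `n` vertices is `VT⁺` if there are `n` graph automorphisms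
`σ_0, …, σ_{n-1}` such that for every vertex `x` the map `i ↦ σ_i x` is a bijection onto
the vertex set. -/
def IsVTPlus {V : Type*} [Fintype V] (G : SimpleGraph V) : Prop :=
  ∃ σ : Fin (Fintype.card V) → (G ≃g G),
    ∀ x : V, Function.Bijective fun i => (σ i) x

private lemma iso_dist_le {V : Type*} {G : SimpleGraph V} (hconn : G.Connected)
    (φ : G ≃g G) (u v : V) : G.dist (φ u) (φ v) ≤ G.dist u v := by
  obtain ⟨p, hp⟩ := (hconn u v).exists_walk_length_eq_dist
  calc G.dist (φ u) (φ v) ≤ (p.map φ.toHom).length := SimpleGraph.dist_le _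
    _ = G.dist u v := by rw [SimpleGraph.Walk.length_map, hp]

private lemma iso_dist_eq {V : Type*} {G : SimpleGraph V} (hconn : G.Connected)
    (φ : G ≃g G) (u v : V) : G.dist (φ u) (φ v) = G.dist u v := by
  refine le_antisymm (iso_dist_le hconn φ u v) ?_
  have := iso_dist_le hconn φ.symm (φ u) (φ v)
  simpa using this

theorem dp_min_entropy_bound_vtPlus {V B : Type*} [Fintype V] [Fintype B]
    (G : SimpleGraph V) (hconn : G.Connected) (hvt : IsVTPlus G)
    (ε : ℝ) (hε : 0 < ε) (M : V → B → ℝ)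
    (hnn : ∀ i b, 0 ≤ M i b) (hrow : ∀ i, ∑ b, M i b = 1)
    (hdp : ∀ i h, G.Adj i h → ∀ b, M i b ≤ Real.exp ε * M h b) :
    ∀ i₀ : V,
      (∑ b, ⨆ i, M i b) ≤
        (Fintype.card V : ℝ) / ∑ j, Real.exp (-ε * (G.dist i₀ j : ℝ)) ∧
      -Real.logb 2 ((1 / (Fintype.card V : ℝ)) * ∑ b, ⨆ i, M i b) ≥
        -Real.logb 2 (1 / ∑ d ∈ Finset.range (G.diam + 1),
          (Nat.card {j : V // G.dist i₀ j = d} : ℝ) * Real.exp (-ε * (d : ℝ))) := by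
  intro i₀
  haveI : Nonempty V := hconn.nonempty
  -- walk bound
  have walk_bound : ∀ (u v : V) (p : G.Walk u v) (b : B),
      M u b ≤ Real.exp (ε * p.length) * M v b := by
    intro u v p b
    induction p with
    | nil => simp
    | cons h p ih =>
      rename_i x y z
      calc M x b ≤ Real.exp ε * M y b := hdp _ _ h b
        _ ≤ Real.exp ε * (Real.exp (ε * p.length) * M z b) :=
            mul_le_mul_of_nonneg_left ih (Real.exp_pos ε).le
        _ = Real.exp (ε * ((SimpleGraph.Walk.cons h p).length : ℝ)) * M z b := by
            rw [← mul_assoc, ← Real.exp_add, SimpleGraph.Walk.length_cons]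
            push_cast
            ring_nf
  have key : ∀ (u v : V) (b : B), Real.exp (-ε * (G.dist u v : ℝ)) * M u b ≤ M v b := by
    intro u v b
    obtain ⟨p, hp⟩ := (hconn u v).exists_walk_length_eq_dist
    have := walk_bound u v p b
    rw [hp] at this
    rw [neg_mul, Real.exp_neg]
    rw [inv_mul_le_iff₀ (Real.exp_pos _)]
    linarith [this]
  -- sum over distances is independent of the base point
  set s : V → ℝ := fun x => ∑ j, Real.exp (-ε * (G.dist x j : ℝ)) with hs
  have hs_const : ∀ x, s x = s i₀ := by
    intro x
    obtain ⟨σ, hσ⟩ := hvt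
    obtain ⟨i, hi⟩ := (hσ i₀).2 x
    have hi' : (σ i) i₀ = x := hi
    calc s x = ∑ j, Real.exp (-ε * (G.dist (σ i i₀) j : ℝ)) := by rw [hi']
      _ = ∑ j, Real.exp (-ε * (G.dist (σ i i₀) (σ i j) : ℝ)) := by
          rw [← Equiv.sum_comp (σ i).toEquiv
            (fun j => Real.exp (-ε * (G.dist (σ i i₀) j : ℝ)))]
          rfl
      _ = s i₀ := by
          simp only [hs]
          exact Finset.sum_congr rfl fun j _ => by rw [iso_dist_eq hconn]
  have hs_pos : 0 < s i₀ := Finset.sum_pos (fun j _ => Real.exp_pos _) ⟨i₀, Finset.mem_univ i₀⟩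
  -- sup facts
  have hbdd : ∀ b, BddAbove (Set.range fun i => M i b) := fun b => Set.Finite.bddAbove (Set.finite_range _)
  have hsup_le : ∀ b, ∀ i, M i b ≤ ⨆ i, M i b := fun b i => le_ciSup (hbdd b) i
  have hsup_eq : ∀ b, ∃ i, M i b = ⨆ i, M i b := fun b => exists_eq_ciSup_of_finite
  -- main bound
  have main : s i₀ * (∑ b, ⨆ i, M i b) ≤ (Fintype.card V : ℝ) := by
    have hb : ∀ b : B, s i₀ * (⨆ i, M i b) ≤ ∑ j, M j b := by
      intro b
      obtain ⟨i, hi⟩ := hsup_eq b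
      rw [← hi, ← hs_const i, hs, Finset.sum_mul]
      exact Finset.sum_le_sum fun j _ => key i j b
    calc s i₀ * (∑ b, ⨆ i, M i b) = ∑ b, s i₀ * (⨆ i, M i b) := Finset.mul_sum _ _ _
      _ ≤ ∑ b : B, ∑ j, M j b := Finset.sum_le_sum fun b _ => hb b
      _ = ∑ j : V, ∑ b, M j b := Finset.sum_comm
      _ = (Fintype.card V : ℝ) := by simp [hrow, Finset.card_univ]
  have first : (∑ b, ⨆ i, M i b) ≤ (Fintype.card V : ℝ) / s i₀ := by
    rw [le_div_iff₀ hs_pos]; linarith [main]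
  refine ⟨first, ?_⟩
  -- rewrite the distance-level sum as s i₀
  have hdiam : ∀ j : V, G.dist i₀ j ∈ Finset.range (G.diam + 1) := by
    intro j
    rw [Finset.mem_range, Nat.lt_succ_iff]
    apply SimpleGraph.dist_le_diam
    obtain ⟨u, v, huv⟩ := SimpleGraph.exists_edist_eq_ediam_of_finite (G := G)
    rw [← huv]
    exact SimpleGraph.edist_ne_top_iff_reachable.mpr (hconn u v)
  have hgroup : (∑ d ∈ Finset.range (G.diam + 1),
      (Nat.card {j : V // G.dist i₀ j = d} : ℝ) * Real.exp (-ε * (d : ℝ))) = s i₀ := by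
    show _ = ∑ j : V, Real.exp (-ε * (G.dist i₀ j : ℝ))
    rw [← Finset.sum_fiberwise_of_maps_to (fun j _ => hdiam j)
      (fun j => Real.exp (-ε * (G.dist i₀ j : ℝ)))]
    refine Finset.sum_congr rfl fun d _ => ?_
    rw [Finset.sum_congr rfl (fun j hj => by
      rw [(Finset.mem_filter.mp hj).2]), Finset.sum_const, nsmul_eq_mul]
    congr 2
    rw [Nat.card_eq_fintype_card, Fintype.card_subtype]
  rw [hgroup]
  -- monotonicity of logb
  have hcard_pos : (0:ℝ) < Fintype.card V := by positivity
  have hsum_pos : (0:ℝ) < ∑ b, ⨆ i, M i b := by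
    have : (1:ℝ) = ∑ b, M i₀ b := (hrow i₀).symm
    have h1 : (1:ℝ) ≤ ∑ b, ⨆ i, M i b := by
      rw [this]; exact Finset.sum_le_sum fun b _ => hsup_le b i₀
    linarith
  have hx_pos : 0 < (1 / (Fintype.card V : ℝ)) * ∑ b, ⨆ i, M i b := by positivity
  have hle : (1 / (Fintype.card V : ℝ)) * (∑ b, ⨆ i, M i b) ≤ 1 / s i₀ := by
    calc (1 / (Fintype.card V : ℝ)) * (∑ b, ⨆ i, M i b)
        ≤ (1 / (Fintype.card V : ℝ)) * ((Fintype.card V : ℝ) / s i₀) :=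
          mul_le_mul_of_nonneg_left first (by positivity)
      _ = 1 / s i₀ := by field_simp
  have hlog := Real.logb_le_logb_of_le (b := 2) one_lt_two hx_pos hle
  linarith [hlog]
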